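/- arXiv:2305.17536 — 2 statements merged into one kernel-verified Lean document; each statement's English description precedes it below -/
import Mathlib

section
/- Let G and H be connected simple graphs, each having at least two vertices, with chromatic numbers χ(G) = k1 and χ(H) = k2. Then χ_lid(G □ H) ≤ k1·k2 − 1. -/
open SimpleGraph

/-- The closed neighborhood of a vertex: the vertex together with its neighbors. -/
def SimpleGraph.closedNbhd {V : Type*} (G : SimpleGraph V) (v : V) : Set V :=
  insert v (G.neighborSet v)

/-- A coloring `f` is a locally identifying coloring of `G` if it is proper and, for every
edge `uw` whose endpoints have distinct closed neighborhoods, the sets of colors appearing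
on the two closed neighborhoods are distinct. -/
def SimpleGraph.IsLidColoring {V α : Type*} (G : SimpleGraph V) (f : V → α) : Prop :=
  (∀ ⦃u w⦄, G.Adj u w → f u ≠ f w) ∧
  (∀ ⦃u w⦄, G.Adj u w → G.closedNbhd u ≠ G.closedNbhd w →
    f '' G.closedNbhd u ≠ f '' G.closedNbhd w)

/-- `G` admits a locally identifying coloring with `k` colors. -/
def SimpleGraph.LidColorable {V : Type*} (G : SimpleGraph V) (k : ℕ) : Prop :=
  ∃ f : V → Fin k, G.IsLidColoring f

/-- The lid-chromatic number of `G`: the least number of colors in a lid-coloring of `G`. -/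
noncomputable def SimpleGraph.lidChromaticNumber {V : Type*} (G : SimpleGraph V) : ℕ∞ :=
  ⨅ k ∈ {k : ℕ | G.LidColorable k}, (k : ℕ∞)

/-- The tensor (categorical/Kronecker) product of two simple graphs. -/
def SimpleGraph.tensorProd {α β : Type*} (G : SimpleGraph α) (H : SimpleGraph β) :
    SimpleGraph (α × β) where
  Adj x y := G.Adj x.1 y.1 ∧ H.Adj x.2 y.2
  symm := ⟨fun _ _ h => ⟨h.1.symm, h.2.symm⟩⟩
  loopless := ⟨fun x h => G.loopless.irrefl x.1 h.1⟩

-- aux: composing with an injective map preserves lid colorings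
lemma lid_comp_inj {V γ δ : Type*} {G : SimpleGraph V} {f : V → γ} {e : γ → δ}
    (he : Function.Injective e) (hf : G.IsLidColoring f) : G.IsLidColoring (e ∘ f) := by
  obtain ⟨h1, h2⟩ := hf
  refine ⟨fun u w h hne => h1 h (he hne), fun u w h hN him => h2 h hN ?_⟩
  rw [Set.image_comp, Set.image_comp] at him
  exact Set.image_injective.mpr he him

lemma lid_of_comp_inj {V γ δ : Type*} {G : SimpleGraph V} {f : V → γ} {e : γ → δ}
    (he : Function.Injective e) (hf : G.IsLidColoring (e ∘ f)) : G.IsLidColoring f := by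
  obtain ⟨h1, h2⟩ := hf
  refine ⟨fun u w h hne => h1 h (by simp [Function.comp, hne]), fun u w h hN him => h2 h hN ?_⟩
  rw [Set.image_comp, Set.image_comp, him]

lemma exists_adj_of_connected {V : Type*} [Nontrivial V] {G : SimpleGraph V}
    (hG : G.Connected) (v : V) : ∃ w, G.Adj v w := by
  obtain ⟨u, hu⟩ := exists_ne v
  obtain ⟨p⟩ := hG.preconnected v u
  cases p with
  | nil => exact absurd rfl hu.symm
  | cons h _ => exact ⟨_, h⟩

/-- For connected graphs `G` and `H` with at least two vertices each and chromatic numbers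
`k₁` and `k₂`, we have `χ_lid(G □ H) ≤ k₁ · k₂ - 1`. -/
theorem lid_stmt_2 {α β : Type*} [Nontrivial α] [Nontrivial β]
    (G : SimpleGraph α) (H : SimpleGraph β) (hG : G.Connected) (hH : H.Connected)
    (k₁ k₂ : ℕ) (hk₁ : G.chromaticNumber = k₁) (hk₂ : H.chromaticNumber = k₂) :
    (G □ H).lidChromaticNumber ≤ (k₁ * k₂ - 1 : ℕ) := by
  obtain ⟨c₁⟩ := chromaticNumber_le_iff_colorable.mp (le_of_eq hk₁)
  obtain ⟨c₂⟩ := chromaticNumber_le_iff_colorable.mp (le_of_eq hk₂)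
  have hGadj := exists_adj_of_connected hG
  have hHadj := exists_adj_of_connected hH
  -- Fin k₁ and Fin k₂ are nontrivial
  have hnt1 : Nontrivial (Fin k₁) := by
    obtain ⟨w, hw⟩ := hGadj (Classical.arbitrary α)
    exact ⟨c₁ _, c₁ _, c₁.valid hw⟩
  have hnt2 : Nontrivial (Fin k₂) := by
    obtain ⟨w, hw⟩ := hHadj (Classical.arbitrary β)
    exact ⟨c₂ _, c₂ _, c₂.valid hw⟩
  obtain ⟨a, a', haa⟩ := hnt1
  obtain ⟨b, b', hbb⟩ := hnt2
  have hpq : ((a, b) : Fin k₁ × Fin k₂) ≠ (a', b') := fun h => haa (congrArg Prod.fst h)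
  -- the merged coloring
  set φ : Fin k₁ × Fin k₂ → Fin k₁ × Fin k₂ := fun x => if x = (a, b) then (a', b') else x with hφ
  have hφ_cases : ∀ x y, φ x = φ y →
      x = y ∨ (x = (a, b) ∧ y = (a', b')) ∨ (x = (a', b') ∧ y = (a, b)) := by
    intro x y h
    by_cases hx : x = (a, b) <;> by_cases hy : y = (a, b) <;> simp [hφ, hx, hy] at h ⊢ <;> tauto
  have hφ_ne_p : ∀ x, φ x ≠ (a, b) := by
    intro x
    by_cases hx : x = (a, b) <;> simp [hφ, hx, Ne.symm hpq]
  set f : α × β → Fin k₁ × Fin k₂ := fun x => φ (c₁ x.1, c₂ x.2) with hf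
  -- key case analysis: member of closed neighborhood
  have hmem : ∀ (x z : α × β), z ∈ (G □ H).closedNbhd x →
      z = x ∨ (G.Adj x.1 z.1 ∧ z.2 = x.2) ∨ (H.Adj x.2 z.2 ∧ z.1 = x.1) := by
    intro x z hz
    rcases hz with hz | hz
    · exact Or.inl hz
    · rw [SimpleGraph.mem_neighborSet, SimpleGraph.boxProd_adj] at hz
      rcases hz with ⟨h1, h2⟩ | ⟨h1, h2⟩
      · exact Or.inr (Or.inl ⟨h1, h2.symm⟩)
      · exact Or.inr (Or.inr ⟨h1, h2.symm⟩)
  have hself : ∀ x : α × β, x ∈ (G □ H).closedNbhd x := fun x => Set.mem_insert _ _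
  have hmemG : ∀ (u u' : α) (v : β), G.Adj u u' → ((u', v) : α × β) ∈ (G □ H).closedNbhd (u, v) := by
    intro u u' v h
    exact Set.mem_insert_iff.mpr (Or.inr (by rw [SimpleGraph.mem_neighborSet, SimpleGraph.boxProd_adj]; exact Or.inl ⟨h, rfl⟩))
  have hmemH : ∀ (u : α) (v v' : β), H.Adj v v' → ((u, v') : α × β) ∈ (G □ H).closedNbhd (u, v) := by
    intro u v v' h
    exact Set.mem_insert_iff.mpr (Or.inr (by rw [SimpleGraph.mem_neighborSet, SimpleGraph.boxProd_adj]; exact Or.inr ⟨h, rfl⟩))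
  -- The diagonal predicate D
  have key : ∀ (u u' : α) (v w : β), G.Adj u u' → H.Adj v w →
      f '' (G □ H).closedNbhd (u, v) = f '' (G □ H).closedNbhd (u', v) →
      ((c₁ u = a ∧ c₂ w = b) ∨ (c₁ u = a' ∧ c₂ w = b')) := by
    intro u u' v w huu hvw him
    have hx : f (u, w) ∈ f '' (G □ H).closedNbhd (u', v) := by
      rw [← him]; exact Set.mem_image_of_mem f (hmemH u v w hvw)
    obtain ⟨z, hz, hfz⟩ := hx
    have hcase := hφ_cases _ _ hfz
    rcases hmem _ _ hz with hzz | ⟨hz1, hz2⟩ | ⟨hz1, hz2⟩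
    · subst hzz
      rcases hcase with h | ⟨h1, h2⟩ | ⟨h1, h2⟩
      · exact absurd (congrArg Prod.fst h) (c₁.valid huu.symm)
      · right; exact ⟨congrArg Prod.fst h2, congrArg Prod.snd h2⟩
      · left; exact ⟨congrArg Prod.fst h2, congrArg Prod.snd h2⟩
    · -- z = (t, v) with G.Adj u' t
      rcases hcase with h | ⟨h1, h2⟩ | ⟨h1, h2⟩
      · exact absurd ((congrArg Prod.snd h).symm.trans (congrArg c₂ hz2)) (c₂.valid hvw.symm)
      · right; exact ⟨congrArg Prod.fst h2, congrArg Prod.snd h2⟩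
      · left; exact ⟨congrArg Prod.fst h2, congrArg Prod.snd h2⟩
    · -- z = (u', s) with H.Adj v s
      rcases hcase with h | ⟨h1, h2⟩ | ⟨h1, h2⟩
      · exact absurd ((congrArg Prod.fst h).symm.trans (congrArg c₁ hz2)) (c₁.valid huu)
      · right; exact ⟨congrArg Prod.fst h2, congrArg Prod.snd h2⟩
      · left; exact ⟨congrArg Prod.fst h2, congrArg Prod.snd h2⟩
  have keyH : ∀ (u t : α) (v v' : β), H.Adj v v' → G.Adj u t →
      f '' (G □ H).closedNbhd (u, v) = f '' (G □ H).closedNbhd (u, v') →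
      ((c₁ t = a ∧ c₂ v = b) ∨ (c₁ t = a' ∧ c₂ v = b')) := by
    intro u t v v' hvv hut him
    have hx : f (t, v) ∈ f '' (G □ H).closedNbhd (u, v') := by
      rw [← him]; exact Set.mem_image_of_mem f (hmemG u t v hut)
    obtain ⟨z, hz, hfz⟩ := hx
    have hcase := hφ_cases _ _ hfz
    rcases hmem _ _ hz with hzz | ⟨hz1, hz2⟩ | ⟨hz1, hz2⟩
    · subst hzz
      rcases hcase with h | ⟨h1, h2⟩ | ⟨h1, h2⟩
      · exact absurd ((congrArg Prod.snd h)) (c₂.valid hvv.symm)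
      · right; exact ⟨congrArg Prod.fst h2, congrArg Prod.snd h2⟩
      · left; exact ⟨congrArg Prod.fst h2, congrArg Prod.snd h2⟩
    · -- z = (t', v') with G.Adj u t'
      rcases hcase with h | ⟨h1, h2⟩ | ⟨h1, h2⟩
      · exact absurd ((congrArg Prod.snd h).symm.trans (congrArg c₂ hz2)) (c₂.valid hvv)
      · right; exact ⟨congrArg Prod.fst h2, congrArg Prod.snd h2⟩
      · left; exact ⟨congrArg Prod.fst h2, congrArg Prod.snd h2⟩
    · -- z = (u, s) with H.Adj v' s
      rcases hcase with h | ⟨h1, h2⟩ | ⟨h1, h2⟩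
      · exact absurd ((congrArg Prod.fst h).symm.trans (congrArg c₁ hz2)) (c₁.valid hut.symm)
      · right; exact ⟨congrArg Prod.fst h2, congrArg Prod.snd h2⟩
      · left; exact ⟨congrArg Prod.fst h2, congrArg Prod.snd h2⟩
  -- f is a lid coloring of G □ H
  have hlid : (G □ H).IsLidColoring f := by
    constructor
    · rintro ⟨u, v⟩ ⟨u', v'⟩ hadj hne
      rw [SimpleGraph.boxProd_adj] at hadj
      rcases hφ_cases _ _ hne with h | ⟨h1, h2⟩ | ⟨h1, h2⟩
      · rcases hadj with ⟨h1, h2⟩ | ⟨h1, h2⟩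
        · exact c₁.valid h1 (congrArg Prod.fst h)
        · exact c₂.valid h1 (congrArg Prod.snd h)
      · rcases hadj with ⟨ha1, ha2⟩ | ⟨ha1, ha2⟩
        · exact hbb (((congrArg Prod.snd h1).symm.trans (congrArg c₂ ha2)).trans (congrArg Prod.snd h2))
        · exact haa (((congrArg Prod.fst h1).symm.trans (congrArg c₁ ha2)).trans (congrArg Prod.fst h2))
      · rcases hadj with ⟨ha1, ha2⟩ | ⟨ha1, ha2⟩
        · exact hbb (((congrArg Prod.snd h2).symm.trans ((congrArg c₂ ha2).symm)).trans (congrArg Prod.snd h1))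
        · exact haa (((congrArg Prod.fst h2).symm.trans ((congrArg c₁ ha2).symm)).trans (congrArg Prod.fst h1))
    · rintro ⟨u, v⟩ ⟨u', v'⟩ hadj hN him
      rw [SimpleGraph.boxProd_adj] at hadj
      rcases hadj with ⟨huu, hvv⟩ | ⟨hvv, huu⟩
      · -- G-direction edge: v' = v
        subst hvv
        obtain ⟨w, hvw⟩ := hHadj v
        have h1 := key u u' v w huu hvw him
        have h2 := key u' u v w huu.symm hvw him.symm
        rcases h1 with ⟨e1, e2⟩ | ⟨e1, e2⟩ <;> rcases h2 with ⟨e3, e4⟩ | ⟨e3, e4⟩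
        · exact c₁.valid huu (e1.trans e3.symm)
        · exact hbb (e2.symm.trans e4)
        · exact hbb (e4.symm.trans e2)
        · exact c₁.valid huu (e1.trans e3.symm)
      · -- H-direction edge: u' = u
        subst huu
        obtain ⟨t, hut⟩ := hGadj u
        have h1 := keyH u t v v' hvv hut him
        have h2 := keyH u t v' v hvv.symm hut him.symm
        rcases h1 with ⟨e1, e2⟩ | ⟨e1, e2⟩ <;> rcases h2 with ⟨e3, e4⟩ | ⟨e3, e4⟩
        · exact c₂.valid hvv (e2.trans e4.symm)
        · exact haa (e1.symm.trans e3)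
        · exact haa (e3.symm.trans e1)
        · exact c₂.valid hvv (e2.trans e4.symm)
  -- package into Fin (k₁ * k₂ - 1)
  have hcard : Fintype.card {x : Fin k₁ × Fin k₂ // x ≠ (a, b)} = k₁ * k₂ - 1 := by
    simp [Fintype.card_subtype_compl, Fintype.card_prod]
  let E : {x : Fin k₁ × Fin k₂ // x ≠ (a, b)} ≃ Fin (k₁ * k₂ - 1) :=
    Fintype.equivFinOfCardEq hcard
  have hLC : (G □ H).LidColorable (k₁ * k₂ - 1) := by
    refine ⟨fun x => E ⟨f x, hφ_ne_p _⟩, ?_⟩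
    have h0 : (G □ H).IsLidColoring (fun x => (⟨f x, hφ_ne_p _⟩ : {x : Fin k₁ × Fin k₂ // x ≠ (a, b)})) := by
      apply lid_of_comp_inj (e := Subtype.val) Subtype.val_injective
      exact hlid
    exact lid_comp_inj E.injective h0
  exact iInf₂_le _ hLC
end

section
/- For every pair of odd integers m and n with 12 ≤ m ≤ n, the lid-chromatic number of the Cartesian product of the cycles C_m and C_n satisfies χ_lid(C_m □ C_n) = 4. -/
open SimpleGraph

/-! ### Auxiliary development -/

def Ftbl : Fin 13 → Fin 13 → Fin 4 :=
  ![![0,3,1,3,2,3,1,3,1,2,0,3,2],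
    ![1,0,3,0,3,1,2,1,2,1,2,0,3],
    ![3,2,0,2,0,2,0,2,0,2,3,2,1],
    ![0,3,1,0,2,0,3,0,3,0,2,1,3],
    ![3,0,3,2,0,1,0,1,0,3,0,3,2],
    ![1,2,0,3,1,0,2,0,2,0,3,1,3],
    ![2,1,3,2,3,1,3,1,3,1,0,2,0],
    ![1,2,0,3,1,0,2,0,2,0,3,1,3],
    ![2,1,3,2,3,1,3,1,3,1,0,2,0],
    ![1,3,0,1,0,3,2,3,2,0,3,1,3],
    ![3,2,1,2,3,2,3,2,3,1,0,3,0],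
    ![2,3,0,1,2,3,0,3,0,3,2,0,3],
    ![3,0,3,2,3,0,3,0,3,1,3,1,0]]

def lidPalmem (a b : Fin 13) (c : Fin 4) : Prop :=
  c = Ftbl a b ∨ c = Ftbl (a-1) b ∨ c = Ftbl (a+1) b ∨ c = Ftbl a (b-1) ∨ c = Ftbl a (b+1)

instance (a b : Fin 13) (c : Fin 4) : Decidable (lidPalmem a b c) := by
  unfold lidPalmem; infer_instance

theorem F_ne1 : ∀ a a' b : Fin 13, (a' = a + 1 ∨ a' = a - 1) → Ftbl a b ≠ Ftbl a' b := by decide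
theorem F_ne2 : ∀ a b b' : Fin 13, (b' = b + 1 ∨ b' = b - 1) → Ftbl a b ≠ Ftbl a b' := by decide
theorem F_band1 : ∀ c : Fin 13, Ftbl 5 c = Ftbl 7 c ∧ Ftbl 6 c = Ftbl 8 c := by decide
theorem F_band2 : ∀ c : Fin 13, Ftbl c 5 = Ftbl c 7 ∧ Ftbl c 6 = Ftbl c 8 := by decide
theorem F_pal1 : ∀ a a' b : Fin 13, (a' = a + 1 ∨ a' = a - 1) →
    ∃ c : Fin 4, ¬ (lidPalmem a b c ↔ lidPalmem a' b c) := by decide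
theorem F_pal2 : ∀ a b b' : Fin 13, (b' = b + 1 ∨ b' = b - 1) →
    ∃ c : Fin 4, ¬ (lidPalmem a b c ↔ lidPalmem a b' c) := by decide

def rhoAux (m k : ℕ) : ℕ :=
  if k ≤ 5 then k else if m - 6 ≤ k then k - (m - 13) else 6 + k % 2

theorem rhoAux_lt (m k : ℕ) (hm : 13 ≤ m) (hk : k < m) : rhoAux m k < 13 := by
  unfold rhoAux; split_ifs <;> omega

def lidRho (m : ℕ) (i : Fin m) : Fin 13 := ⟨rhoAux m i.val % 13, Nat.mod_lt _ (by norm_num)⟩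

set_option maxHeartbeats 0 in
theorem rhoAux_nbrs (m k : ℕ) (hm : 13 ≤ m) (ho : m % 2 = 1) (hk : k < m) :
    (rhoAux m (if k = 0 then m - 1 else k - 1) = (rhoAux m k + 12) % 13 ∧
     rhoAux m (if k = m - 1 then 0 else k + 1) = (rhoAux m k + 1) % 13) ∨
    (rhoAux m k = 6 ∧ rhoAux m (if k = 0 then m - 1 else k - 1) = 7 ∧
     rhoAux m (if k = m - 1 then 0 else k + 1) = 7) ∨
    (rhoAux m k = 7 ∧ rhoAux m (if k = 0 then m - 1 else k - 1) = 6 ∧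
     rhoAux m (if k = m - 1 then 0 else k + 1) = 6) := by
  unfold rhoAux
  split_ifs <;> (try omega)
  have h9 : k = m - 6 := by omega
  omega

theorem fin_succ_val {M : ℕ} (i : Fin (M+2)) :
    ((i+1 : Fin (M+2))).val = if i.val = M + 2 - 1 then 0 else i.val + 1 := by
  rw [Fin.add_def, Fin.val_one]
  simp only [Fin.val_mk, show M + 2 - 1 = M + 1 from rfl]
  rcases eq_or_ne i.val (M+1) with h | h
  · rw [if_pos h, h, show M + 1 + 1 = M + 2 from rfl, Nat.mod_self]
  · rw [if_neg h, Nat.mod_eq_of_lt (by have := i.isLt; omega)]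

theorem fin_pred_val {M : ℕ} (i : Fin (M+2)) :
    ((i-1 : Fin (M+2))).val = if i.val = 0 then M + 2 - 1 else i.val - 1 := by
  rw [Fin.sub_def, Fin.val_one]
  simp only [Fin.val_mk, show M + 2 - 1 = M + 1 from rfl]
  rcases eq_or_ne i.val 0 with h | h
  · rw [if_pos h, h, Nat.add_zero, Nat.mod_eq_of_lt (by omega)]
  · rw [if_neg h, show M + 1 + i.val = (i.val - 1) + (M + 2) by omega,
      Nat.add_mod_right, Nat.mod_eq_of_lt (by have := i.isLt; omega)]

theorem rho_nbrs {M : ℕ} (hm : 13 ≤ M + 2) (ho : (M + 2) % 2 = 1) (i : Fin (M + 2)) :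
    (lidRho (M+2) (i-1) = lidRho (M+2) i - 1 ∧ lidRho (M+2) (i+1) = lidRho (M+2) i + 1) ∨
    (lidRho (M+2) i = 6 ∧ lidRho (M+2) (i-1) = 7 ∧ lidRho (M+2) (i+1) = 7) ∨
    (lidRho (M+2) i = 7 ∧ lidRho (M+2) (i-1) = 6 ∧ lidRho (M+2) (i+1) = 6) := by
  have h1 := rhoAux_nbrs (M+2) i.val hm ho i.isLt
  have hv : ∀ j : Fin (M+2), (lidRho (M+2) j).val = rhoAux (M+2) j.val :=
    fun j => Nat.mod_eq_of_lt (rhoAux_lt _ _ hm j.isLt)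
  have v1 : ((1:Fin 13)).val = 1 := rfl
  have v6 : ((6:Fin 13)).val = 6 := rfl
  have v7 : ((7:Fin 13)).val = 7 := rfl
  have e1 : ((lidRho (M+2) i - 1 : Fin 13)).val = (rhoAux (M+2) i.val + 12) % 13 := by
    rw [Fin.sub_def]; simp only [Fin.val_mk, v1, hv]; try omega
  have e2 : ((lidRho (M+2) i + 1 : Fin 13)).val = (rhoAux (M+2) i.val + 1) % 13 := by
    rw [Fin.add_def]; simp only [Fin.val_mk, v1, hv]; try omega
  simp only [Fin.ext_iff, hv, e1, e2, v6, v7]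
  rw [fin_pred_val i, fin_succ_val i]
  omega

theorem rho_step {M : ℕ} (hm : 13 ≤ M + 2) (ho : (M + 2) % 2 = 1) (i : Fin (M + 2)) :
    (lidRho (M+2) (i+1) = lidRho (M+2) i + 1 ∨ lidRho (M+2) (i+1) = lidRho (M+2) i - 1) ∧
    (lidRho (M+2) (i-1) = lidRho (M+2) i + 1 ∨ lidRho (M+2) (i-1) = lidRho (M+2) i - 1) := by
  rcases rho_nbrs hm ho i with ⟨p1, p2⟩ | ⟨p0, p1, p2⟩ | ⟨p0, p1, p2⟩
  · exact ⟨Or.inl p2, Or.inr p1⟩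
  · constructor
    · left; rw [p2, p0]; decide
    · left; rw [p1, p0]; decide
  · constructor
    · right; rw [p2, p0]; decide
    · right; rw [p1, p0]; decide

open SimpleGraph in
theorem cycle_adj_iff {M : ℕ} (v w : Fin (M+2)) :
    (cycleGraph (M+2)).Adj v w ↔ w = v - 1 ∨ w = v + 1 := by
  rw [← SimpleGraph.mem_neighborSet, cycleGraph_neighborSet]
  simp

open SimpleGraph in
theorem closedNbhd_eq {M N : ℕ} (i : Fin (M+2)) (j : Fin (N+2)) :
    (cycleGraph (M+2) □ cycleGraph (N+2)).closedNbhd (i,j) =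
      {(i,j), (i-1,j), (i+1,j), (i,j-1), (i,j+1)} := by
  ext ⟨a,b⟩
  simp only [SimpleGraph.closedNbhd, Set.mem_insert_iff, SimpleGraph.mem_neighborSet,
    boxProd_adj, Set.mem_singleton_iff, Prod.mk.injEq, cycle_adj_iff]
  aesop

def liftF (M N : ℕ) : Fin (M+2) × Fin (N+2) → Fin 4 :=
  fun p => Ftbl (lidRho (M+2) p.1) (lidRho (N+2) p.2)

theorem cover1 {M : ℕ} (hm : 13 ≤ M + 2) (hmo : (M + 2) % 2 = 1) (i : Fin (M+2))
    (y : Fin 13) (c : Fin 4) :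
    (c = Ftbl (lidRho (M+2) (i-1)) y ∨ c = Ftbl (lidRho (M+2) (i+1)) y) ↔
    (c = Ftbl (lidRho (M+2) i - 1) y ∨ c = Ftbl (lidRho (M+2) i + 1) y) := by
  rcases rho_nbrs hm hmo i with ⟨p1, p2⟩ | ⟨p0, p1, p2⟩ | ⟨p0, p1, p2⟩
  · rw [p1, p2]
  · rw [p1, p2, p0, show ((6:Fin 13) - 1) = 5 from rfl, show ((6:Fin 13) + 1) = 7 from rfl,
      (F_band1 y).1]
  · rw [p1, p2, p0, show ((7:Fin 13) - 1) = 6 from rfl, show ((7:Fin 13) + 1) = 8 from rfl,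
      (F_band1 y).2]

theorem cover2 {N : ℕ} (hn : 13 ≤ N + 2) (hno : (N + 2) % 2 = 1) (j : Fin (N+2))
    (x : Fin 13) (c : Fin 4) :
    (c = Ftbl x (lidRho (N+2) (j-1)) ∨ c = Ftbl x (lidRho (N+2) (j+1))) ↔
    (c = Ftbl x (lidRho (N+2) j - 1) ∨ c = Ftbl x (lidRho (N+2) j + 1)) := by
  rcases rho_nbrs hn hno j with ⟨p1, p2⟩ | ⟨p0, p1, p2⟩ | ⟨p0, p1, p2⟩
  · rw [p1, p2]
  · rw [p1, p2, p0, show ((6:Fin 13) - 1) = 5 from rfl, show ((6:Fin 13) + 1) = 7 from rfl,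
      (F_band2 x).1]
  · rw [p1, p2, p0, show ((7:Fin 13) - 1) = 6 from rfl, show ((7:Fin 13) + 1) = 8 from rfl,
      (F_band2 x).2]

open SimpleGraph in
set_option maxHeartbeats 1000000 in
theorem palette_mem {M N : ℕ} (hm : 13 ≤ M + 2) (hmo : (M + 2) % 2 = 1)
    (hn : 13 ≤ N + 2) (hno : (N + 2) % 2 = 1) (i : Fin (M+2)) (j : Fin (N+2)) (c : Fin 4) :
    c ∈ liftF M N '' ((cycleGraph (M+2) □ cycleGraph (N+2)).closedNbhd (i,j)) ↔
      lidPalmem (lidRho (M+2) i) (lidRho (N+2) j) c := by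
  rw [closedNbhd_eq, Set.image_insert_eq, Set.image_insert_eq, Set.image_insert_eq,
    Set.image_insert_eq, Set.image_singleton]
  simp only [Set.mem_insert_iff, Set.mem_singleton_iff, liftF, lidPalmem]
  have hcov1 := cover1 hm hmo i (lidRho (N+2) j) c
  have hcov2 := cover2 hn hno j (lidRho (M+2) i) c
  constructor
  · rintro (h | h | h | h | h)
    · exact Or.inl h
    · rcases hcov1.mp (Or.inl h) with h' | h'
      · exact Or.inr (Or.inl h')
      · exact Or.inr (Or.inr (Or.inl h'))
    · rcases hcov1.mp (Or.inr h) with h' | h'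
      · exact Or.inr (Or.inl h')
      · exact Or.inr (Or.inr (Or.inl h'))
    · rcases hcov2.mp (Or.inl h) with h' | h'
      · exact Or.inr (Or.inr (Or.inr (Or.inl h')))
      · exact Or.inr (Or.inr (Or.inr (Or.inr h')))
    · rcases hcov2.mp (Or.inr h) with h' | h'
      · exact Or.inr (Or.inr (Or.inr (Or.inl h')))
      · exact Or.inr (Or.inr (Or.inr (Or.inr h')))
  · rintro (h | h | h | h | h)
    · exact Or.inl h
    · rcases hcov1.mpr (Or.inl h) with h' | h'
      · exact Or.inr (Or.inl h')
      · exact Or.inr (Or.inr (Or.inl h'))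
    · rcases hcov1.mpr (Or.inr h) with h' | h'
      · exact Or.inr (Or.inl h')
      · exact Or.inr (Or.inr (Or.inl h'))
    · rcases hcov2.mpr (Or.inl h) with h' | h'
      · exact Or.inr (Or.inr (Or.inr (Or.inl h')))
      · exact Or.inr (Or.inr (Or.inr (Or.inr h')))
    · rcases hcov2.mpr (Or.inr h) with h' | h'
      · exact Or.inr (Or.inr (Or.inr (Or.inl h')))
      · exact Or.inr (Or.inr (Or.inr (Or.inr h')))

open SimpleGraph in
theorem lid_upper {M N : ℕ} (hm : 13 ≤ M + 2) (hmo : (M + 2) % 2 = 1)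
    (hn : 13 ≤ N + 2) (hno : (N + 2) % 2 = 1) :
    (cycleGraph (M+2) □ cycleGraph (N+2)).LidColorable 4 := by
  refine ⟨liftF M N, fun u w hadj => ?_, fun u w hadj _ => ?_⟩
  · obtain ⟨u1, u2⟩ := u; obtain ⟨w1, w2⟩ := w
    rcases boxProd_adj.mp hadj with ⟨h, h2⟩ | ⟨h, h2⟩
    · simp only at h h2; subst h2
      rcases (cycle_adj_iff u1 w1).mp h with rfl | rfl
      · exact F_ne1 _ _ _ (rho_step hm hmo u1).2
      · exact F_ne1 _ _ _ (rho_step hm hmo u1).1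
    · simp only at h h2; subst h2
      rcases (cycle_adj_iff u2 w2).mp h with rfl | rfl
      · exact F_ne2 _ _ _ (rho_step hn hno u2).2
      · exact F_ne2 _ _ _ (rho_step hn hno u2).1
  · obtain ⟨u1, u2⟩ := u; obtain ⟨w1, w2⟩ := w
    rcases boxProd_adj.mp hadj with ⟨h, h2⟩ | ⟨h, h2⟩
    · simp only at h h2; subst h2
      have hrel : lidRho (M+2) w1 = lidRho (M+2) u1 + 1 ∨
          lidRho (M+2) w1 = lidRho (M+2) u1 - 1 := by
        rcases (cycle_adj_iff u1 w1).mp h with rfl | rfl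
        · exact (rho_step hm hmo u1).2
        · exact (rho_step hm hmo u1).1
      obtain ⟨c, hc⟩ := F_pal1 (lidRho (M+2) u1) (lidRho (M+2) w1) (lidRho (N+2) u2) hrel
      intro heq
      exact hc (((palette_mem hm hmo hn hno u1 u2 c).symm.trans
        (heq ▸ Iff.rfl)).trans (palette_mem hm hmo hn hno w1 u2 c))
    · simp only at h h2; subst h2
      have hrel : lidRho (N+2) w2 = lidRho (N+2) u2 + 1 ∨
          lidRho (N+2) w2 = lidRho (N+2) u2 - 1 := by
        rcases (cycle_adj_iff u2 w2).mp h with rfl | rfl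
        · exact (rho_step hn hno u2).2
        · exact (rho_step hn hno u2).1
      obtain ⟨c, hc⟩ := F_pal2 (lidRho (M+2) u1) (lidRho (N+2) u2) (lidRho (N+2) w2) hrel
      intro heq
      exact hc (((palette_mem hm hmo hn hno u1 u2 c).symm.trans
        (heq ▸ Iff.rfl)).trans (palette_mem hm hmo hn hno u1 w2 c))

theorem three_trap {S T : Set (Fin 3)} {a b : Fin 3} (hab : a ≠ b)
    (haS : a ∈ S) (hbS : b ∈ S) (haT : a ∈ T) (hbT : b ∈ T)
    (hS : S ≠ Set.univ) (hT : T ≠ Set.univ) : S = T := by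
  obtain ⟨c, hc⟩ : ∃ c, c ∉ S := by
    by_contra h; push_neg at h; exact hS (Set.eq_univ_of_forall h)
  obtain ⟨d, hd⟩ : ∃ d, d ∉ T := by
    by_contra h; push_neg at h; exact hT (Set.eq_univ_of_forall h)
  have hca : c ≠ a := fun h => hc (h ▸ haS)
  have hcb : c ≠ b := fun h => hc (h ▸ hbS)
  have hda : d ≠ a := fun h => hd (h ▸ haT)
  have hdb : d ≠ b := fun h => hd (h ▸ hbT)
  have triple : ∀ a b c d : Fin 3, a ≠ b → c ≠ a → c ≠ b → d ≠ a → d ≠ b → c = d := by decide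
  have hcd : c = d := triple a b c d hab hca hcb hda hdb
  have hx' : ∀ a b c y : Fin 3, a ≠ b → c ≠ a → c ≠ b → y ≠ c → y = a ∨ y = b := by decide
  have hx : ∀ y : Fin 3, y ≠ c → y = a ∨ y = b := fun y hy => hx' a b c y hab hca hcb hy
  ext x
  constructor
  · intro hxS
    have : x ≠ c := fun h => hc (h ▸ hxS)
    rcases hx x this with rfl | rfl
    · exact haT
    · exact hbT
  · intro hxT
    have : x ≠ c := fun h => hd ((hcd ▸ h) ▸ hxT)
    rcases hx x this with rfl | rfl
    · exact haS
    · exact hbS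

open SimpleGraph in
theorem lid_mono {V : Type*} (G : SimpleGraph V) {k l : ℕ} (hkl : k ≤ l)
    (h : G.LidColorable k) : G.LidColorable l := by
  obtain ⟨f, hf1, hf2⟩ := h
  refine ⟨fun v => Fin.castLE hkl (f v), fun u w ha he => hf1 ha (Fin.castLE_injective hkl he),
    fun u w ha hN heq => ?_⟩
  apply hf2 ha hN
  have hcomp : (fun v => Fin.castLE hkl (f v)) = (Fin.castLE hkl) ∘ f := rfl
  rw [hcomp, Set.image_comp, Set.image_comp] at heq
  exact Set.image_injective.mpr (Fin.castLE_injective hkl) heq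

open Fin.NatCast Fin.CommRing in
open SimpleGraph in
theorem not_lid3 {M N : ℕ} (hmo : (M + 2) % 2 = 1) :
    ¬ (cycleGraph (M+2) □ cycleGraph (N+2)).LidColorable 3 := by
  rintro ⟨f, hf1, hf2⟩
  have tne : ∀ t : Fin (M+2), t ≠ t + 1 := by
    intro t h
    have h2 := congrArg Fin.val h
    rw [fin_succ_val] at h2
    have := t.isLt
    split_ifs at h2 <;> omega
  have one_ne : ((0:Fin (N+2)) + 1) ≠ 0 := by
    intro h
    rw [zero_add] at h
    exact one_ne_zero h
  have hadj : ∀ t : Fin (M+2),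
      (cycleGraph (M+2) □ cycleGraph (N+2)).Adj (t, (0:Fin (N+2))) (t+1, 0) := by
    intro t
    rw [boxProd_adj]
    left
    exact ⟨(cycle_adj_iff t (t+1)).mpr (Or.inr rfl), rfl⟩
  have hNne : ∀ t : Fin (M+2),
      (cycleGraph (M+2) □ cycleGraph (N+2)).closedNbhd (t, (0:Fin (N+2))) ≠
      (cycleGraph (M+2) □ cycleGraph (N+2)).closedNbhd (t+1, 0) := by
    intro t heq
    have hmem : ((t, (0:Fin (N+2))+1)) ∈
        (cycleGraph (M+2) □ cycleGraph (N+2)).closedNbhd (t, (0:Fin (N+2))) := by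
      rw [closedNbhd_eq]; right; right; right; right; rfl
    rw [heq, closedNbhd_eq] at hmem
    simp only [Set.mem_insert_iff, Set.mem_singleton_iff] at hmem
    rcases hmem with h | h | h | h | h <;> rw [Prod.ext_iff] at h <;>
      first
        | exact one_ne h.2
        | exact tne t (by
            have := h.1
            simp only [add_sub_cancel_right] at this
            exact this ▸ rfl)
        | exact tne t h.1
  have hpal : ∀ t : Fin (M+2),
      f '' (cycleGraph (M+2) □ cycleGraph (N+2)).closedNbhd (t, (0:Fin (N+2))) ≠
      f '' (cycleGraph (M+2) □ cycleGraph (N+2)).closedNbhd (t+1, 0) :=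
    fun t => hf2 (hadj t) (hNne t)
  set Q : Fin (M+2) → Prop :=
    fun t => f '' (cycleGraph (M+2) □ cycleGraph (N+2)).closedNbhd (t, (0:Fin (N+2))) =
      Set.univ with hQ
  have memself : ∀ (t : Fin (M+2)) (s : Fin (N+2)), (t, s) ∈
      (cycleGraph (M+2) □ cycleGraph (N+2)).closedNbhd (t, s) := by
    intro t s; rw [closedNbhd_eq]; left; rfl
  have memsucc : ∀ t : Fin (M+2), ((t+1, (0:Fin (N+2)))) ∈
      (cycleGraph (M+2) □ cycleGraph (N+2)).closedNbhd (t, (0:Fin (N+2))) := by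
    intro t; rw [closedNbhd_eq]; right; right; left; rfl
  have mempred : ∀ t : Fin (M+2), ((t, (0:Fin (N+2)))) ∈
      (cycleGraph (M+2) □ cycleGraph (N+2)).closedNbhd (t+1, (0:Fin (N+2))) := by
    intro t; rw [closedNbhd_eq]; right; left
    rw [Prod.ext_iff]
    exact ⟨(add_sub_cancel_right t 1).symm, rfl⟩
  have key : ∀ t : Fin (M+2), Q (t+1) ↔ ¬ Q t := by
    intro t
    have hne : f (t, (0:Fin (N+2))) ≠ f (t+1, 0) := hf1 (hadj t)
    constructor
    · intro h1 h0
      exact hpal t (h0.trans h1.symm)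
    · intro h0
      by_contra h1
      exact hpal t (three_trap hne (Set.mem_image_of_mem f (memself t 0))
        (Set.mem_image_of_mem f (memsucc t)) (Set.mem_image_of_mem f (mempred t))
        (Set.mem_image_of_mem f (memself (t+1) 0)) h0 h1)
  have alt : ∀ k : ℕ, Q ((k : Fin (M+2))) ↔ (Q 0 ↔ k % 2 = 0) := by
    intro k
    induction k with
    | zero => simp
    | succ k ih =>
      have hc : ((k+1 : ℕ) : Fin (M+2)) = ((k : ℕ) : Fin (M+2)) + 1 := by push_cast; ring
      rw [hc, key, ih]
      rcases Nat.even_or_odd k with he | ho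
      · have h0 : k % 2 = 0 := Nat.even_iff.mp he
        have h1 : (k+1) % 2 = 1 := by omega
        simp only [h0, h1]
        tauto
      · have h0 : k % 2 = 1 := Nat.odd_iff.mp ho
        have h1 : (k+1) % 2 = 0 := by omega
        simp only [h0, h1]
        tauto
  have hfin := alt (M+2)
  rw [Fin.natCast_self] at hfin
  have : ¬ ((M+2) % 2 = 0) := by omega
  tauto

open SimpleGraph in
theorem lid_not_lt {M N : ℕ} (hmo : (M + 2) % 2 = 1) (k : ℕ) (hk : k ≤ 3) :
    ¬ (cycleGraph (M+2) □ cycleGraph (N+2)).LidColorable k :=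
  fun h => not_lid3 (N := N) hmo (lid_mono _ hk h)

/-- For odd `m`, `n` with `12 ≤ m ≤ n`, `χ_lid(C_m □ C_n) = 4`. -/
theorem lid_stmt_8 (m n : ℕ) (hm : Odd m) (hn : Odd n) (h12 : 12 ≤ m) (hmn : m ≤ n) :
    (cycleGraph m □ cycleGraph n).lidChromaticNumber = 4 := by
  have hmo : m % 2 = 1 := Nat.odd_iff.mp hm
  have hno : n % 2 = 1 := Nat.odd_iff.mp hn
  obtain ⟨M, rfl⟩ : ∃ M, m = M + 2 := ⟨m - 2, by omega⟩
  obtain ⟨N, rfl⟩ : ∃ N, n = N + 2 := ⟨n - 2, by omega⟩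
  have hm13 : 13 ≤ M + 2 := by omega
  have hn13 : 13 ≤ N + 2 := by omega
  have hup : (cycleGraph (M+2) □ cycleGraph (N+2)).LidColorable 4 :=
    lid_upper hm13 hmo hn13 hno
  rw [SimpleGraph.lidChromaticNumber]
  apply le_antisymm
  · have hmem : (4:ℕ) ∈ {k : ℕ | (cycleGraph (M+2) □ cycleGraph (N+2)).LidColorable k} := hup
    have h := iInf₂_le
      (f := fun (k : ℕ) (_ : k ∈ {k : ℕ | (cycleGraph (M+2) □ cycleGraph (N+2)).LidColorable k}) =>
        (k : ℕ∞)) 4 hmem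
    simpa using h
  · refine le_iInf₂ fun k hk => ?_
    have h4 : 4 ≤ k := by
      by_contra hlt
      push_neg at hlt
      exact lid_not_lt (N := N) hmo k (by omega) hk
    have : ((4:ℕ) : ℕ∞) ≤ (k : ℕ∞) := by exact_mod_cast h4
    simpa using this
end
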